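/- If κ < cov(M), then for every family A ⊆ ω^ω of size κ, Player II has no winning strategy in the anti-localizing game with respect to A. (Hence the minimal size of a family for which Player II has a winning strategy in the anti-localizing game is at least cov(M), and combined with the converse inequality it equals cov(M).) -/

import Mathlib

open Cardinal

/-- `φ` is a slalom: `φ(n)` is a set of `n+1` naturals. -/
def IsSlalom (φ : ℕ → Finset ℕ) : Prop := ∀ n, (φ n).card = n + 1

/-- Player II wins a play of the anti-localizing game with respect to `A`. -/
def IIWinsAntiLoc (A : Set (ℕ → ℕ)) (a : ℕ → Finset ℕ) (i : ℕ → Bool) : Prop :=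
  {k | i k = true}.Infinite ∧ ∃ x ∈ A, ∀ k, (i k = true ↔ x k ∉ a k)

/-- Player II has a winning strategy in the anti-localizing game with respect to `A`. -/
def IIWinStratAntiLoc (A : Set (ℕ → ℕ)) : Prop :=
  ∃ τ : List (Finset ℕ) → Bool, ∀ a : ℕ → Finset ℕ, IsSlalom a →
    IIWinsAntiLoc A a (fun k => τ ((List.range (k + 1)).map a))

/-- `cov(M)`: the least number of meager sets covering the Cantor space. -/
noncomputable def covMeager : Cardinal :=
  sInf { c | ∃ S : Set (Set (ℕ → Bool)),
    (∀ s ∈ S, IsMeagre s) ∧ ⋃₀ S = Set.univ ∧ #S = c }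


open Cardinal

namespace AntiLoc

abbrev Cond : Type := {l : List (Finset ℕ) // ∀ (k : ℕ) (h : k < l.length), (l[k]'h).card = k + 1}

def emptyCond : Cond := ⟨[], fun k h => absurd h (by simp)⟩

instance : Nonempty Cond := ⟨emptyCond⟩

noncomputable def enum : ℕ → Cond := (exists_surjective_nat Cond).choose

lemma enum_surj : Function.Surjective enum := (exists_surjective_nat Cond).choose_spec

def fillAvoid (v w k : ℕ) : Finset ℕ :=
  insert v ((Finset.range k).image fun i => v + w + i + 1)

lemma mem_fillAvoid (v w k : ℕ) : v ∈ fillAvoid v w k := Finset.mem_insert_self _ _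

lemma not_mem_fillAvoid {v w : ℕ} (k : ℕ) (h : w ≠ v) : w ∉ fillAvoid v w k := by
  simp only [fillAvoid, Finset.mem_insert, Finset.mem_image, Finset.mem_range, not_or, not_exists]
  exact ⟨h, fun i => by omega⟩

lemma card_fillAvoid (v w k : ℕ) : (fillAvoid v w k).card = k + 1 := by
  rw [fillAvoid, Finset.card_insert_of_notMem, Finset.card_image_of_injective,
    Finset.card_range]
  · intro a b hab; simp only [] at hab; omega
  · simp only [Finset.mem_image, Finset.mem_range, not_exists]
    intro i; omega

def padA (l : List (Finset ℕ)) (m : ℕ) : List (Finset ℕ) :=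
  l ++ List.ofFn (fun i : Fin (m - l.length) => Finset.range (l.length + i + 1))

lemma padA_length (l : List (Finset ℕ)) (m : ℕ) : (padA l m).length = max l.length m := by
  simp [padA]; omega

lemma padA_prefix (l : List (Finset ℕ)) (m : ℕ) : l <+: padA l m := List.prefix_append _ _

lemma padA_valid {l : List (Finset ℕ)} (hl : ∀ (k : ℕ) (h : k < l.length), (l[k]'h).card = k + 1)
    (m : ℕ) : ∀ (k : ℕ) (h : k < (padA l m).length), ((padA l m)[k]'h).card = k + 1 := by
  intro k h
  unfold padA at h ⊢
  rcases lt_or_ge k l.length with hk | hk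
  · rw [List.getElem_append_left hk]; exact hl k hk
  · rw [List.getElem_append_right hk, List.getElem_ofFn]
    rw [show l.length + (k - l.length) + 1 = k + 1 by omega, Finset.card_range]

lemma valid_concat {l : List (Finset ℕ)} (hl : ∀ (k : ℕ) (h : k < l.length), (l[k]'h).card = k + 1)
    {S : Finset ℕ} (hS : S.card = l.length + 1) :
    ∀ (k : ℕ) (h : k < (l ++ [S]).length), ((l ++ [S])[k]'h).card = k + 1 := by
  intro k h
  rcases lt_or_ge k l.length with hk | hk
  · rw [List.getElem_append_left hk]; exact hl k hk
  · have hk' : k = l.length := by simp at h; omega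
    subst hk'
    rw [List.getElem_concat_length rfl]
    exact hS

end AntiLoc

namespace AntiLoc

variable (τ : List (Finset ℕ) → Bool)

def Mism (x : ℕ → ℕ) (l : List (Finset ℕ)) : Prop :=
  ∃ (k : ℕ) (h : k < l.length), ¬ (τ (l.take (k+1)) = true ↔ x k ∉ l[k]'h)

def Safe (x : ℕ → ℕ) (p : Cond) : Prop := ∀ q : Cond, p.1 <+: q.1 → ¬ Mism τ x q.1

lemma take_eq_of_prefix {l m : List (Finset ℕ)} (h : l <+: m) {n : ℕ} (hn : n ≤ l.length) :
    m.take n = l.take n := by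
  obtain ⟨t, rfl⟩ := h
  exact List.take_append_of_le_length hn

lemma Safe.mono {x : ℕ → ℕ} {p q : Cond} (h : Safe τ x p) (hpq : p.1 <+: q.1) : Safe τ x q :=
  fun r hr => h r (hpq.trans hr)

open Classical in
noncomputable def zc (p : Cond) : ℕ → ℕ :=
  if h : ∃ x, Safe τ x p then h.choose else fun _ => 0

lemma zc_safe {p : Cond} (h : ∃ x, Safe τ x p) : Safe τ (zc τ p) p := by
  rw [zc, dif_pos h]; exact h.choose_spec

lemma Safe.match {x : ℕ → ℕ} {p : Cond} (h : Safe τ x p) {q : Cond} (hpq : p.1 <+: q.1)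
    (k : ℕ) (hk : k < q.1.length) :
    (τ (q.1.take (k+1)) = true ↔ x k ∉ q.1[k]'hk) := by
  by_contra hne
  exact h q hpq ⟨k, hk, hne⟩

lemma safe_agree {x y : ℕ → ℕ} {p : Cond} (hx : Safe τ x p) (hy : Safe τ y p) :
    ∀ k, p.1.length ≤ k → x k = y k := by
  intro k hk
  by_contra hne
  have hllen : (padA p.1 k).length = k := by rw [padA_length]; omega
  have hcard : (fillAvoid (x k) (y k) k).card = (padA p.1 k).length + 1 := by
    rw [hllen]; exact card_fillAvoid _ _ _
  set q : Cond := ⟨padA p.1 k ++ [fillAvoid (x k) (y k) k],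
    valid_concat (padA_valid p.2 k) hcard⟩ with hq
  have hpre : p.1 <+: q.1 := (padA_prefix p.1 k).trans (List.prefix_append _ _)
  have hkq : k < q.1.length := by
    show k < (padA p.1 k ++ _).length
    simp [hllen]
  have hget : q.1[k]'hkq = fillAvoid (x k) (y k) k := by
    show (padA p.1 k ++ [fillAvoid (x k) (y k) k])[k]'_ = _
    rw [List.getElem_concat_length hllen.symm]
  have htake : q.1.take (k+1) = q.1 := by
    apply List.take_of_length_le
    show (padA p.1 k ++ _).length ≤ k + 1
    simp [hllen]
  have h1 := hx.match τ hpre k hkq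
  have h2 := hy.match τ hpre k hkq
  rw [htake, hget] at h1 h2
  have hx_mem : x k ∈ fillAvoid (x k) (y k) k := mem_fillAvoid _ _ _
  have hy_nmem : y k ∉ fillAvoid (x k) (y k) k := not_mem_fillAvoid k (Ne.symm hne)
  rw [iff_true_intro hy_nmem] at h2
  rw [h2.mpr trivial] at h1
  exact (h1.mp rfl) hx_mem

def LeS (q p : Cond) : Prop :=
  p.1 <+: q.1 ∧ ∀ (k : ℕ) (hk : k < q.1.length), p.1.length ≤ k →
    (∃ x, Safe τ x p) → zc τ p k ∈ q.1[k]'hk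

lemma LeS.refl (p : Cond) : LeS τ p p :=
  ⟨List.prefix_refl _, fun k hk hk' _ => absurd hk (by omega)⟩

lemma LeS.trans {r q p : Cond} (hrq : LeS τ r q) (hqp : LeS τ q p) : LeS τ r p := by
  refine ⟨hqp.1.trans hrq.1, ?_⟩
  intro k hk hpk hex
  rcases lt_or_ge k q.1.length with h | h
  · rw [← hrq.1.getElem h]
    exact hqp.2 k h hpk hex
  · have hzsafe : Safe τ (zc τ p) q := (zc_safe τ hex).mono τ hqp.1
    have hexq : ∃ x, Safe τ x q := ⟨_, hzsafe⟩
    have hmem := hrq.2 k hk h hexq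
    have hagree : zc τ q k = zc τ p k := safe_agree τ (zc_safe τ hexq) hzsafe k h
    rwa [hagree] at hmem

end AntiLoc

namespace AntiLoc

variable (τ : List (Finset ℕ) → Bool)

noncomputable def extOne (p : Cond) : Cond :=
  ⟨p.1 ++ [fillAvoid (zc τ p p.1.length) 0 p.1.length],
   valid_concat p.2 (card_fillAvoid _ _ _)⟩

lemma extOne_length (p : Cond) : (extOne τ p).1.length = p.1.length + 1 := by
  show (p.1 ++ _).length = _; simp

lemma LeS.extOne (p : Cond) : LeS τ (AntiLoc.extOne τ p) p := by
  refine ⟨List.prefix_append _ _, ?_⟩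
  intro k hk hpk hex
  have hkk : k = p.1.length := by
    rw [extOne_length] at hk; omega
  subst hkk
  show _ ∈ (p.1 ++ [fillAvoid (zc τ p p.1.length) 0 p.1.length])[p.1.length]'_
  rw [List.getElem_concat_length (l := p.1) (a := fillAvoid (zc τ p p.1.length) 0 p.1.length) rfl hk]
  exact mem_fillAvoid _ _ _

noncomputable def padN (p : Cond) : ℕ → Cond
  | 0 => p
  | m+1 => extOne τ (padN p m)

lemma padN_length (p : Cond) (m : ℕ) : (padN τ p m).1.length = p.1.length + m := by
  induction m with
  | zero => rfl
  | succ m ih => rw [padN, extOne_length, ih]; omega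

lemma LeS.padN (p : Cond) (m : ℕ) : LeS τ (AntiLoc.padN τ p m) p := by
  induction m with
  | zero => exact LeS.refl τ p
  | succ m ih => exact (LeS.extOne τ _).trans τ ih

lemma dense_length (m : ℕ) (p : Cond) : ∃ q, LeS τ q p ∧ m < q.1.length :=
  ⟨padN τ p (m+1), LeS.padN τ p _, by rw [padN_length]; omega⟩

lemma dense_decide (x : ℕ → ℕ) (p : Cond) :
    ∃ q : Cond, LeS τ q p ∧ (Mism τ x q.1 ∨ Safe τ x q) := by
  by_cases hS : Safe τ x p
  · exact ⟨p, LeS.refl τ p, Or.inr hS⟩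
  by_cases hM : Mism τ x p.1
  · exact ⟨p, LeS.refl τ p, Or.inl hM⟩
  by_cases hE : ∃ y, Safe τ y p
  case neg =>
    rw [Safe] at hS; push_neg at hS
    obtain ⟨q, hpre, hmis⟩ := hS
    exact ⟨q, ⟨hpre, fun k hk hpk hex => absurd hex hE⟩, Or.inl hmis⟩
  case pos =>
  have hsx' : Safe τ (zc τ p) p := zc_safe τ hE
  have hk : ∃ k, p.1.length ≤ k ∧ x k ≠ zc τ p k := by
    by_contra hc; push_neg at hc
    apply hS
    intro q hpre hmis
    obtain ⟨k, hkq, hne⟩ := hmis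
    rcases lt_or_ge k p.1.length with h | h
    · apply hM
      refine ⟨k, h, ?_⟩
      rwa [take_eq_of_prefix hpre (by omega), ← hpre.getElem h] at hne
    · apply hsx' q hpre
      exact ⟨k, hkq, by rwa [hc k h] at hne⟩
  obtain ⟨k, hpk, hxx⟩ := hk
  have hp'len : (padN τ p (k - p.1.length)).1.length = k := by rw [padN_length]; omega
  set p' := padN τ p (k - p.1.length) with hp'
  have hp'le : LeS τ p' p := LeS.padN τ p _
  have hsx'' : Safe τ (zc τ p) p' := hsx'.mono τ hp'le.1
  have hE' : ∃ y, Safe τ y p' := ⟨_, hsx''⟩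
  have hz : zc τ p' k = zc τ p k := safe_agree τ (zc_safe τ hE') hsx'' k (le_of_eq hp'len)
  have hcard : (fillAvoid (zc τ p k) (x k) k).card = p'.1.length + 1 := by
    rw [hp'len]; exact card_fillAvoid _ _ _
  set S := fillAvoid (zc τ p k) (x k) k with hSdef
  refine ⟨⟨p'.1 ++ [S], valid_concat p'.2 hcard⟩, ?_, ?_⟩
  · refine LeS.trans τ ⟨List.prefix_append _ _, ?_⟩ hp'le
    intro j hj hpj hex'
    have hjk : j = k := by
      simp only [List.length_append, List.length_singleton, hp'len] at hj
      omega
    subst hjk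
    show zc τ p' j ∈ (p'.1 ++ [S])[j]'_
    rw [List.getElem_concat_length hp'len.symm, hz]
    exact mem_fillAvoid _ _ _
  · have hkq : k < (p'.1 ++ [S]).length := by simp [hp'len]
    have hget : (p'.1 ++ [S])[k]'hkq = S := List.getElem_concat_length hp'len.symm _
    have htake : (p'.1 ++ [S]).take (k+1) = p'.1 ++ [S] := by
      apply List.take_of_length_le; simp [hp'len]
    by_cases hb : τ (p'.1 ++ [S]) = true
    · exfalso
      apply hsx'' ⟨p'.1 ++ [S], valid_concat p'.2 hcard⟩ (List.prefix_append _ _)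
      refine ⟨k, hkq, ?_⟩
      rw [htake, hget, hb]
      simp only [true_iff, hSdef]
      exact fun hmem => hmem (mem_fillAvoid _ _ _)
    · left
      refine ⟨k, hkq, ?_⟩
      rw [htake, hget]
      simp only [hSdef]
      intro hiff
      exact hb (hiff.mpr (not_mem_fillAvoid k hxx))

end AntiLoc

namespace AntiLoc

variable (τ : List (Finset ℕ) → Bool)

open Classical in
noncomputable def step (st : Cond × ℕ) (b : Bool) : Cond × ℕ :=
  bif b then (st.1, st.2 + 1)
  else if LeS τ (enum st.2) st.1 then (enum st.2, 0) else (st.1, 0)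

noncomputable def reads (s : List Bool) : Cond × ℕ := s.foldl (step τ) (emptyCond, 0)

noncomputable def readC (s : List Bool) : Cond := (reads τ s).1

lemma step_fst_le (st : Cond × ℕ) (b : Bool) : LeS τ (step τ st b).1 st.1 := by
  cases b
  · simp only [step, cond_false]
    split
    · next h => exact h
    · exact LeS.refl τ _
  · exact LeS.refl τ _

lemma foldl_fst_le (t : List Bool) : ∀ st : Cond × ℕ, LeS τ (t.foldl (step τ) st).1 st.1 := by
  induction t with
  | nil => intro st; exact LeS.refl τ _
  | cons b t ih =>
    intro st
    rw [List.foldl_cons]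
    exact (ih (step τ st b)).trans τ (step_fst_le τ st b)

lemma reads_append (s t : List Bool) : reads τ (s ++ t) = t.foldl (step τ) (reads τ s) :=
  List.foldl_append

lemma foldl_replicate (j : ℕ) (p : Cond) (m : ℕ) :
    (List.replicate j true).foldl (step τ) (p, m) = (p, m + j) := by
  induction j generalizing m with
  | zero => simp
  | succ j ih =>
    rw [List.replicate_succ, List.foldl_cons]
    have hs : step τ (p, m) true = (p, m + 1) := rfl
    rw [hs, ih]
    congr 1
    omega

lemma generic (O : Cond → Prop) (hd : ∀ p, ∃ q, LeS τ q p ∧ O q) (s : List Bool) :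
    ∃ t : List Bool, O (readC τ (s ++ t)) := by
  obtain ⟨q, hq, hO⟩ := hd (step τ (reads τ s) false).1
  obtain ⟨j, hj⟩ := enum_surj q
  set P := (step τ (reads τ s) false).1 with hP
  refine ⟨false :: (List.replicate j true ++ [false]), ?_⟩
  rw [readC, reads_append, List.foldl_cons]
  have hsnd : (step τ (reads τ s) false).2 = 0 := by
    simp only [step, cond_false]
    split <;> rfl
  have hstep : step τ (reads τ s) false = (P, 0) := by
    rw [hP, ← hsnd]
  rw [hstep, List.foldl_append, foldl_replicate]
  simp only [List.foldl_cons, List.foldl_nil, Nat.zero_add]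
  show O (step τ (P, j) false).1
  simp only [step, cond_false]
  rw [if_pos (show LeS τ (enum j) P by rw [hj]; exact hq)]
  show O (enum j)
  rw [hj]; exact hO

end AntiLoc


namespace AntiLoc

def pre (c : ℕ → Bool) (n : ℕ) : List Bool := (List.range n).map c

lemma pre_length (c : ℕ → Bool) (n : ℕ) : (pre c n).length = n := by simp [pre]

lemma pre_getElem (c : ℕ → Bool) (n k : ℕ) (h : k < (pre c n).length) :
    (pre c n)[k]'h = c k := by simp [pre]

lemma pre_prefix (c : ℕ → Bool) {n m : ℕ} (h : n ≤ m) : pre c n <+: pre c m := by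
  rw [List.prefix_iff_eq_take, pre_length, pre, pre, ← List.map_take, List.take_range]
  congr 2
  omega

lemma denseOpen_of_dense_strings (D : Set (List Bool)) (hd : ∀ s, ∃ t, s ++ t ∈ D) :
    IsOpen {c : ℕ → Bool | ∃ n, pre c n ∈ D} ∧ Dense {c : ℕ → Bool | ∃ n, pre c n ∈ D} := by
  constructor
  · have heq : {c : ℕ → Bool | ∃ n, pre c n ∈ D} = ⋃ s ∈ D, {c | pre c s.length = s} := by
      ext c
      simp only [Set.mem_setOf_eq, Set.mem_iUnion]
      constructor
      · rintro ⟨n, hn⟩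
        exact ⟨pre c n, hn, by rw [pre_length]⟩
      · rintro ⟨s, hs, hps⟩
        exact ⟨s.length, by rw [hps]; exact hs⟩
    rw [heq]
    refine isOpen_biUnion fun s _ => ?_
    have heq2 : {c : ℕ → Bool | pre c s.length = s} = ⋂ (k : Fin s.length), {c | c k.1 = s[k.1]} := by
      ext c
      simp only [Set.mem_setOf_eq, Set.mem_iInter]
      constructor
      · intro h k
        have h2 : (pre c s.length)[(k:ℕ)]'(by rw [pre_length]; exact k.2) = s[(k:ℕ)] :=
          List.getElem_of_eq h _
        rw [pre_getElem] at h2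
        exact h2
      · intro h
        apply List.ext_getElem (pre_length c s.length)
        intro i h1 h2
        rw [pre_getElem]
        exact h ⟨i, h2⟩
    rw [heq2]
    refine isOpen_iInter_of_finite fun k => ?_
    show IsOpen ((fun p : ℕ → Bool => p k.1) ⁻¹' {s[k.1]})
    exact (isOpen_discrete _).preimage (continuous_apply k.1)
  · rw [dense_iff_inter_open]
    rintro O hO ⟨e, he⟩
    obtain ⟨I, u, hIu, hsub⟩ := isOpen_pi_iff.1 hO e he
    set N := (I.sup id) + 1 with hN
    have hIN : ∀ a ∈ I, a < N := fun a ha => Nat.lt_succ_of_le (Finset.le_sup (f := id) ha)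
    obtain ⟨t, ht⟩ := hd (pre e N)
    set L := pre e N ++ t with hL
    have hNL : N ≤ L.length := by
      rw [hL, List.length_append, pre_length]; omega
    classical
    set d : ℕ → Bool := fun k => if h : k < L.length then L[k] else true with hd'
    refine ⟨d, hsub ?_, L.length, ?_⟩
    · rw [Set.mem_pi]
      intro a ha
      have haN : a < N := hIN a ha
      have haL : a < L.length := lt_of_lt_of_le haN hNL
      have hda : d a = e a := by
        show (if h : a < L.length then L[a]'h else true) = e a
        rw [dif_pos haL]
        show (pre e N ++ t)[a]'haL = e a
        rw [List.getElem_append_left (by rw [pre_length]; exact haN), pre_getElem]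
      rw [hda]
      exact (hIu a ha).2
    · show pre d L.length ∈ D
      have : pre d L.length = L := by
        apply List.ext_getElem (pre_length d L.length)
        intro i h1 h2
        rw [pre_getElem]
        show (if h : i < L.length then L[i]'h else true) = L[i]'h2
        rw [dif_pos h2]
      rw [this]
      exact ht

lemma exists_generic_real {ι : Type} (hι : #ι < covMeager) (D : ι → Set (List Bool))
    (hd : ∀ i s, ∃ t, s ++ t ∈ D i) :
    ∃ c : ℕ → Bool, ∀ i, ∃ n, pre c n ∈ D i := by
  by_contra hc
  push_neg at hc
  choose f hf using hc
  have hcov : ⋃₀ (Set.range fun i => {c : ℕ → Bool | ∃ n, pre c n ∈ D i}ᶜ) = Set.univ := by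
    ext c
    simp only [Set.mem_sUnion, Set.mem_range, Set.mem_univ, iff_true]
    refine ⟨{c' : ℕ → Bool | ∃ n, pre c' n ∈ D (f c)}ᶜ, ⟨f c, rfl⟩, ?_⟩
    rintro ⟨n, hn⟩
    exact hf c n hn
  have hmeag : ∀ s ∈ Set.range fun i => {c : ℕ → Bool | ∃ n, pre c n ∈ D i}ᶜ, IsMeagre s := by
    rintro s ⟨i, rfl⟩
    obtain ⟨ho, hde⟩ := denseOpen_of_dense_strings (D i) (hd i)
    rw [IsMeagre, compl_compl]
    exact residual_of_dense_open ho hde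
  have hle : covMeager ≤ #(Set.range fun i => {c : ℕ → Bool | ∃ n, pre c n ∈ D i}ᶜ) :=
    csInf_le' ⟨_, hmeag, hcov, rfl⟩
  exact absurd (hle.trans_lt (Cardinal.mk_range_le.trans_lt hι)) (lt_irrefl _)

lemma flip_ne (O : Set (ℕ → Bool)) (hO : IsOpen O) (hne : O.Nonempty) (c : ℕ → Bool) :
    ∃ d ∈ O, d ≠ c := by
  obtain ⟨e, he⟩ := hne
  obtain ⟨I, u, hIu, hsub⟩ := isOpen_pi_iff.1 hO e he
  set N := (I.sup id) + 1 with hN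
  classical
  refine ⟨fun k => if k = N then !(c N) else e k, hsub ?_, ?_⟩
  · rw [Set.mem_pi]
    intro a ha
    have : a ≠ N := by
      have := Finset.le_sup (f := id) ha
      simp only [id] at this
      omega
    simp only [if_neg this]
    exact (hIu a ha).2
  · intro h
    have := congrFun h N
    simp only [if_pos rfl] at this
    exact absurd this (by cases c N <;> simp)

lemma singleton_meagre (c : ℕ → Bool) : IsMeagre ({c} : Set (ℕ → Bool)) := by
  rw [IsMeagre]
  apply residual_of_dense_open isClosed_singleton.isOpen_compl
  rw [dense_iff_inter_open]
  intro O hO hne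
  obtain ⟨d, hdO, hdc⟩ := flip_ne O hO hne c
  exact ⟨d, hdO, by simpa using hdc⟩

lemma covSet_nonempty :
    { c | ∃ S : Set (Set (ℕ → Bool)),
      (∀ s ∈ S, IsMeagre s) ∧ ⋃₀ S = Set.univ ∧ #S = c }.Nonempty := by
  refine ⟨_, Set.range (fun c : ℕ → Bool => ({c} : Set (ℕ → Bool))), ?_, ?_, rfl⟩
  · rintro s ⟨c, rfl⟩
    exact singleton_meagre c
  · ext c
    simp only [Set.mem_sUnion, Set.mem_range, Set.mem_univ, iff_true]
    exact ⟨{c}, ⟨c, rfl⟩, rfl⟩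

lemma aleph0_lt_covMeager : ℵ₀ < covMeager := by
  rcases lt_or_ge ℵ₀ covMeager with h | h
  · exact h
  exfalso
  have hmem := csInf_mem covSet_nonempty
  rw [← covMeager] at hmem
  obtain ⟨S, hmeag, hcov, hcard⟩ := hmem
  have hSc : S.Countable := by
    rw [← Set.countable_coe_iff]
    exact Cardinal.mk_le_aleph0_iff.mp (hcard.le.trans h)
  rcases S.eq_empty_or_nonempty with rfl | hSne
  · rw [Set.sUnion_empty] at hcov
    exact Set.empty_ne_univ hcov
  obtain ⟨g, rfl⟩ := hSc.exists_eq_range hSne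
  have hmg : IsMeagre (⋃ n, g n) := isMeagre_iUnion (fun n => hmeag _ ⟨n, rfl⟩)
  rw [Set.sUnion_range] at hcov
  rw [hcov] at hmg
  have hres : (∅ : Set (ℕ → Bool)) ∈ residual _ := by
    rw [IsMeagre, Set.compl_univ] at hmg
    exact hmg
  have hdense := dense_of_mem_residual hres
  exact Set.not_nonempty_empty hdense.nonempty

end AntiLoc

namespace AntiLoc

lemma no_strategy {A : Set (ℕ → ℕ)} (h : #A < covMeager) : ¬ IIWinStratAntiLoc A := by
  rintro ⟨τ, hτ⟩
  classical
  set D : (↥A ⊕ ℕ) → Set (List Bool) := fun i =>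
    match i with
    | Sum.inl x => {s | Mism τ x.1 (readC τ s).1 ∨ Safe τ x.1 (readC τ s)}
    | Sum.inr m => {s | m < (readC τ s).1.length}
    with hD
  have hcard : #(↥A ⊕ ℕ) < covMeager := by
    rw [Cardinal.mk_sum, Cardinal.lift_id, Cardinal.lift_id, Cardinal.mk_nat]
    exact Cardinal.add_lt_of_lt aleph0_lt_covMeager.le h aleph0_lt_covMeager
  have hdense : ∀ i s, ∃ t, s ++ t ∈ D i := by
    intro i s
    cases i with
    | inl x => exact generic τ (fun p => Mism τ x.1 p.1 ∨ Safe τ x.1 p) (dense_decide τ x.1) s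
    | inr m => exact generic τ (fun p => m < p.1.length) (dense_length τ m) s
  obtain ⟨c, hc⟩ := exists_generic_real hcard D hdense
  have hlen : ∀ m, ∃ n, m < (readC τ (pre c n)).1.length := fun m => hc (Sum.inr m)
  choose nf hnf using hlen
  have hchain : ∀ {n m : ℕ}, n ≤ m → LeS τ (readC τ (pre c m)) (readC τ (pre c n)) := by
    intro n m hnm
    obtain ⟨t, ht⟩ := pre_prefix c hnm
    rw [← ht, readC, reads_append]
    exact foldl_fst_le τ t _
  set a : ℕ → Finset ℕ := fun k => (readC τ (pre c (nf k))).1[k]'(hnf k) with ha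
  have hcoh : ∀ (n k : ℕ) (hk : k < (readC τ (pre c n)).1.length),
      (readC τ (pre c n)).1[k]'hk = a k := by
    intro n k hk
    rcases le_total n (nf k) with hle | hle
    · exact (hchain hle).1.getElem hk
    · exact ((hchain hle).1.getElem (hnf k)).symm
  have hslalom : IsSlalom a := fun n => (readC τ (pre c (nf n))).2 n (hnf n)
  have hplay : ∀ (n k : ℕ) (hk : k < (readC τ (pre c n)).1.length),
      (List.range (k+1)).map a = (readC τ (pre c n)).1.take (k+1) := by
    intro n k hk
    apply List.ext_getElem
    · simp only [List.length_map, List.length_range, List.length_take]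
      omega
    · intro i h1 h2
      simp only [List.getElem_map, List.getElem_range, List.getElem_take]
      exact (hcoh n i (by simp only [List.length_map, List.length_range] at h1; omega)).symm
  obtain ⟨hinf, x, hxA, hmatch⟩ := hτ a hslalom
  rcases hc (Sum.inl ⟨x, hxA⟩) with ⟨n₀, hn₀⟩
  rcases hn₀ with hmis | hsafe
  · obtain ⟨k, hk, hne⟩ := hmis
    apply hne
    have hm : τ ((List.range (k+1)).map a) = true ↔ x k ∉ a k := hmatch k
    rw [hplay n₀ k hk] at hm
    rwa [← hcoh n₀ k hk] at hm
  · have hcap : ∀ k, (readC τ (pre c n₀)).1.length ≤ k → x k ∈ a k := by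
      intro k hk
      have hN2 : nf k ≤ max n₀ (nf k) := le_max_right _ _
      have hq := hchain hN2
      have hkN : k < (readC τ (pre c (max n₀ (nf k)))).1.length :=
        lt_of_lt_of_le (hnf k) hq.1.length_le
      have hcapt := (hchain (le_max_left n₀ (nf k))).2 k hkN hk ⟨x, hsafe⟩
      rw [hcoh _ k hkN] at hcapt
      rwa [← safe_agree τ hsafe (zc_safe τ ⟨x, hsafe⟩) k hk] at hcapt
    apply hinf
    have hfin : {k | τ ((List.range (k+1)).map a) = true} ⊆
        Set.Iio (readC τ (pre c n₀)).1.length := by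
      intro k hkmem
      by_contra hge
      simp only [Set.mem_Iio, not_lt] at hge
      exact ((hmatch k).mp hkmem) (hcap k hge)
    exact Set.Finite.subset (Set.finite_Iio _) hfin

lemma winsUniv : IIWinStratAntiLoc Set.univ := by
  refine ⟨fun _ => true, fun a ha => ?_⟩
  constructor
  · have : ({k : ℕ | true = true} : Set ℕ).Infinite := by
      rw [show {k : ℕ | true = true} = Set.univ from Set.eq_univ_of_forall fun k => rfl]
      exact Set.infinite_univ
    exact this
  · refine ⟨fun k => (a k).sup id + 1, Set.mem_univ _, fun k => ?_⟩
    refine iff_of_true rfl ?_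
    intro hmem
    have h2 : id ((a k).sup id + 1) ≤ (a k).sup id := Finset.le_sup hmem
    simp only [id] at h2
    omega

end AntiLoc

theorem stmt11 :
    (∀ κ : Cardinal, κ < covMeager →
      ∀ A : Set (ℕ → ℕ), #A = κ → ¬ IIWinStratAntiLoc A) ∧
    covMeager ≤ sInf { c | ∃ A : Set (ℕ → ℕ), IIWinStratAntiLoc A ∧ #A = c } := by
  constructor
  · intro κ hκ A hA
    exact AntiLoc.no_strategy (hA ▸ hκ)
  · apply le_csInf
    · exact ⟨_, Set.univ, AntiLoc.winsUniv, rfl⟩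
    · rintro b ⟨A, hw, rfl⟩
      by_contra hlt
      exact AntiLoc.no_strategy (lt_of_not_ge hlt) hw
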